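/- Define A_{λ,i}^n := ∑_{k=i}^{n-1} (−1)^{n-k} (n-1 choose k)(k-1)_{[i-1]} λ_{N-k} with λ_j = j(N-j)(1+s)/N + (N-j)uν₀. Then A_{λ,i}^n = 0 for 1 ≤ i ≤ n−3, A_{λ,n-2}^n = (n-1)!·(1+s)/N, and A_{λ,n-1}^n = −(n-1)!·((N−(n−1))(1+s)/N + uν₀). -/

import Mathlib

open Finset

lemma prod_eq_desc (k r : ℕ) : ∏ j ∈ Finset.range r, ((k:ℝ) - j) = (k.descFactorial r : ℝ) := by
  induction r with
  | zero => simp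
  | succ r ih =>
    rw [Finset.prod_range_succ, ih, Nat.descFactorial_succ]
    rcases le_or_gt r k with h | h
    · push_cast [Nat.cast_sub h]; ring
    · rw [Nat.descFactorial_eq_zero_iff_lt.2 h]
      simp [Nat.sub_eq_zero_of_le h.le]

lemma S_eval (m r : ℕ) (hr : r ≤ m + 1) :
    ∑ k ∈ Finset.range (m+1), (-1:ℝ)^(m-k) * (m.choose k : ℝ) * ∏ j ∈ Finset.range r, ((k:ℝ) - j)
    = if r = m then (m.factorial : ℝ) else 0 := by
  have key : ∀ k, (-1:ℝ)^(m-k) * (m.choose k : ℝ) * ∏ j ∈ Finset.range r, ((k:ℝ) - j)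
      = (r.factorial : ℝ) * ((-1:ℝ)^(m-k) * ((m.choose k : ℕ) * (k.choose r) : ℕ)) := by
    intro k
    rw [prod_eq_desc, Nat.descFactorial_eq_factorial_mul_choose]
    push_cast; ring
  simp only [key, ← Finset.mul_sum]
  rcases le_or_gt r m with hrm | hrm
  · -- restrict sum to Ico r (m+1)
    have hz : ∑ k ∈ Finset.range (m+1), ((-1:ℝ)^(m-k) * ((m.choose k * k.choose r : ℕ) : ℝ))
        = ∑ k ∈ Finset.Ico r (m+1), ((-1:ℝ)^(m-k) * ((m.choose k * k.choose r : ℕ) : ℝ)) := by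
      rw [eq_comm]
      apply Finset.sum_subset
      · intro x hx; simp at hx ⊢; omega
      · intro x hx hx'
        simp only [Finset.mem_range, Finset.mem_Ico] at hx hx'
        have : x < r := by omega
        rw [Nat.choose_eq_zero_of_lt this]
        simp
    rw [hz, Finset.sum_Ico_eq_sum_range]
    have hm : m + 1 - r = (m - r) + 1 := by omega
    rw [hm]
    have key2 : ∀ t ∈ Finset.range ((m-r)+1),
        ((-1:ℝ)^(m-(r+t)) * ((m.choose (r+t) * (r+t).choose r : ℕ) : ℝ))
        = ((m.choose r : ℝ) * (-1:ℝ)^(m-r)) * ((-1:ℝ)^t * ((m-r).choose t : ℝ)) := by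
      intro t ht
      simp only [Finset.mem_range] at ht
      have h1 : r + t ≤ m := by omega
      rw [Nat.choose_mul (n := m) (by omega : r ≤ r + t)]
      have h2 : r + t - r = t := by omega
      rw [h2]
      have h3 : m - (r + t) = (m - r) - t := by omega
      have h4 : (-1:ℝ)^((m-r)-t) = (-1:ℝ)^(m-r) * (-1:ℝ)^t := by
        have : ((m-r)-t) + t = m - r := by omega
        have h5 : (-1:ℝ)^(((m-r)-t) + t) = (-1:ℝ)^(m-r) := by rw [this]
        rw [pow_add] at h5
        have h6 : ((-1:ℝ)^t) * ((-1:ℝ)^t) = 1 := by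
          rw [← pow_add, ← two_mul, pow_mul]; norm_num
        calc (-1:ℝ)^((m-r)-t) = (-1:ℝ)^((m-r)-t) * ((-1:ℝ)^t * (-1:ℝ)^t) := by rw [h6]; ring
          _ = (-1:ℝ)^(m-r) * (-1:ℝ)^t := by rw [← mul_assoc, h5]
      rw [h3, h4]
      push_cast; ring
    rw [Finset.sum_congr rfl key2, ← Finset.mul_sum]
    have := Int.alternating_sum_range_choose (n := m - r)
    have hsum : ∑ t ∈ Finset.range ((m-r)+1), ((-1:ℝ)^t * ((m-r).choose t : ℝ))
        = if m - r = 0 then 1 else 0 := by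
      have := congrArg (fun z : ℤ => (z : ℝ)) this
      push_cast at this
      convert this using 2
    rw [hsum]
    rcases eq_or_ne r m with h | h
    · subst h; simp [Nat.descFactorial_eq_factorial_mul_choose]
    · have : m - r ≠ 0 := by omega
      simp [this, h]
  · -- r = m + 1 : every descFactorial is 0
    have : r = m + 1 := by omega
    subst this
    have hz : ∀ k ∈ Finset.range (m+1), ((-1:ℝ)^(m-k) * ((m.choose k * k.choose (m+1) : ℕ) : ℝ)) = 0 := by
      intro k hk
      simp only [Finset.mem_range] at hk
      rw [Nat.choose_eq_zero_of_lt (show k < m+1 from hk)]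
      simp
    rw [Finset.sum_congr rfl hz]
    simp [Nat.ne_of_gt (by omega : m < m + 1)]

/-- Evaluation of the quantities `A_{λ,i}^n` from the proof of Theorem 5.1:
they vanish for `i ≤ n-3`, and take explicit values for `i = n-2, n-1`.
Here `λ_{N-k} = (N-k)k(1+s)/N + kuν₀`. -/
theorem stmt12 (N n : ℕ) (hn : 3 ≤ n) (hnN : n ≤ N - 1) (s u ν0 : ℝ)
    (hs : 0 ≤ s) (hu : 0 ≤ u) (hν0 : 0 ≤ ν0)
    (A : ℕ → ℝ)
    (hA : ∀ i, A i = ∑ k ∈ Finset.Icc i (n-1),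
      (-1:ℝ)^(n-k) * ((n-1).choose k : ℝ) *
        (∏ j ∈ Finset.range (i-1), (((k:ℝ) - 1) - j)) *
        (((N:ℝ) - k) * k * (1 + s) / N + (k:ℝ) * u * ν0)) :
    (∀ i, 1 ≤ i → i ≤ n - 3 → A i = 0) ∧
    A (n-2) = ((n-1).factorial : ℝ) * (1 + s) / N ∧
    A (n-1) = -((n-1).factorial : ℝ) * (((N:ℝ) - ((n:ℝ) - 1)) * (1 + s) / N + u * ν0) := by
  have hN4 : 4 ≤ N := by omega
  have hN0 : (N:ℝ) ≠ 0 := by positivity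
  set c1 : ℝ := (1 + s) + u * ν0 with hc1
  set c2 : ℝ := -((1 + s) / N) with hc2
  set S : ℕ → ℝ := fun r => ∑ k ∈ Finset.range n,
      (-1:ℝ)^(n-1-k) * ((n-1).choose k : ℝ) * ∏ j ∈ Finset.range r, ((k:ℝ) - j) with hS
  have hSval : ∀ r, r ≤ n → S r = if r = n - 1 then ((n-1).factorial : ℝ) else 0 := by
    intro r hr
    have hn1 : n = (n - 1) + 1 := by omega
    rw [hS]
    simp only []
    rw [hn1]
    exact S_eval (n-1) r (by omega)
  have main : ∀ i, 1 ≤ i → A i = -(c2 * S (i+1) + (c1 + (i:ℝ) * c2) * S i) := by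
    intro i hi
    rw [hA i]
    have hsub : Finset.Icc i (n-1) ⊆ Finset.range n := by
      intro x hx; simp only [Finset.mem_Icc] at hx; simp only [Finset.mem_range]; omega
    have hzero : ∀ k ∈ Finset.range n, k ∉ Finset.Icc i (n-1) →
        (-1:ℝ)^(n-k) * ((n-1).choose k : ℝ) *
          (∏ j ∈ Finset.range (i-1), (((k:ℝ) - 1) - j)) *
          (((N:ℝ) - k) * k * (1 + s) / N + (k:ℝ) * u * ν0) = 0 := by
      intro k hk hk'
      simp only [Finset.mem_range] at hk
      simp only [Finset.mem_Icc] at hk'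
      have hki : k < i := by omega
      rcases Nat.eq_zero_or_pos k with hk0 | hk0
      · subst hk0; simp
      · have hmem : k - 1 ∈ Finset.range (i-1) := by simp only [Finset.mem_range]; omega
        rw [Finset.prod_eq_zero hmem ?_]
        · ring
        · have : ((k-1 : ℕ) : ℝ) = (k:ℝ) - 1 := by push_cast [Nat.cast_sub hk0]; ring
          rw [this]; ring
    rw [Finset.sum_subset hsub hzero]
    have hpt : ∀ k ∈ Finset.range n,
        (-1:ℝ)^(n-k) * ((n-1).choose k : ℝ) *
          (∏ j ∈ Finset.range (i-1), (((k:ℝ) - 1) - j)) *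
          (((N:ℝ) - k) * k * (1 + s) / N + (k:ℝ) * u * ν0)
        = -(c2 * ((-1:ℝ)^(n-1-k) * ((n-1).choose k : ℝ) * ∏ j ∈ Finset.range (i+1), ((k:ℝ) - j))
            + (c1 + (i:ℝ) * c2) * ((-1:ℝ)^(n-1-k) * ((n-1).choose k : ℝ) * ∏ j ∈ Finset.range i, ((k:ℝ) - j))) := by
      intro k hk
      simp only [Finset.mem_range] at hk
      have hsign : (-1:ℝ)^(n-k) = -((-1:ℝ)^(n-1-k)) := by
        have : n - k = (n-1-k) + 1 := by omega
        rw [this, pow_succ]; ring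
      have hQ : ∏ j ∈ Finset.range i, ((k:ℝ) - j)
          = (k:ℝ) * ∏ j ∈ Finset.range (i-1), (((k:ℝ) - 1) - j) := by
        have hi1 : i = (i-1) + 1 := by omega
        rw [hi1, Finset.prod_range_succ']
        simp only [Nat.cast_add, Nat.cast_one, Nat.cast_zero, sub_zero]
        rw [mul_comm]
        congr 1
        apply Finset.prod_congr rfl
        intro j _; push_cast; ring
      have hR : ∏ j ∈ Finset.range (i+1), ((k:ℝ) - j)
          = (∏ j ∈ Finset.range i, ((k:ℝ) - j)) * ((k:ℝ) - i) := by
        rw [Finset.prod_range_succ]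
      have hlam : ((N:ℝ) - k) * k * (1 + s) / N + (k:ℝ) * u * ν0
          = (k:ℝ) * (c1 + c2 * (k:ℝ)) := by
        rw [hc1, hc2]; field_simp; ring
      rw [hsign, hlam, hR, hQ]; ring
    rw [Finset.sum_congr rfl hpt]
    rw [Finset.sum_neg_distrib, Finset.sum_add_distrib, ← Finset.mul_sum, ← Finset.mul_sum]
  refine ⟨?_, ?_, ?_⟩
  · intro i hi1 hi3
    rw [main i hi1, hSval (i+1) (by omega), hSval i (by omega)]
    rw [if_neg (by omega), if_neg (by omega)]
    ring
  · rw [main (n-2) (by omega)]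
    have h1 : (n-2) + 1 = n - 1 := by omega
    rw [h1, hSval (n-1) (by omega), hSval (n-2) (by omega)]
    rw [if_pos rfl, if_neg (by omega)]
    rw [hc2]; field_simp; ring
  · rw [main (n-1) (by omega)]
    have h1 : (n-1) + 1 = n := by omega
    rw [h1, hSval n (by omega), hSval (n-1) (by omega)]
    rw [if_neg (by omega), if_pos rfl]
    have hcast : ((n-1 : ℕ) : ℝ) = (n:ℝ) - 1 := by
      push_cast [Nat.cast_sub (by omega : 1 ≤ n)]; ring
    rw [hcast, hc1, hc2]
    field_simp
    ring_nf
    try tauto
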